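/- Let S be a finite nonempty type and let P and Q be probability mass functions on S with Q(s) > 0 for all s. Then for every function g : S → ℝ, ∑_{s} P(s)·g(s) − ∑_{s} Q(s)·exp(g(s) − 1) ≤ ∑_{s : P(s) > 0} P(s)·log(P(s)/Q(s)), i.e., the variational objective E_P[g] − E_Q[e^{g−1}] is a lower bound for the Kullback–Leibler divergence KL(P‖Q). -/

import Mathlib

/-- the variational objective `E_P[g] − E_Q[e^{g−1}]` is a lower bound for the
Kullback–Leibler divergence `KL(P‖Q) = ∑_{s : P(s) > 0} P(s)·log(P(s)/Q(s))`. -/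
theorem variational_lower_bound_KL {S : Type*} [Fintype S] [Nonempty S]
    (P Q : S → ℝ)
    (hP0 : ∀ s, 0 ≤ P s) (hP1 : ∑ s, P s = 1)
    (hQ0 : ∀ s, 0 < Q s) (hQ1 : ∑ s, Q s = 1)
    (g : S → ℝ) :
    (∑ s, P s * g s) - (∑ s, Q s * Real.exp (g s - 1)) ≤
      ∑ s ∈ Finset.univ.filter (fun s => 0 < P s), P s * Real.log (P s / Q s) := by
  rw [← Finset.sum_sub_distrib]
  rw [Finset.sum_filter]
  apply Finset.sum_le_sum
  intro s _
  rcases eq_or_lt_of_le (hP0 s) with h | h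
  · simp only [← h, if_neg (lt_irrefl (0:ℝ)), zero_mul, zero_sub, neg_nonpos]
    exact le_of_lt (mul_pos (hQ0 s) (Real.exp_pos _))
  · rw [if_pos h]
    have hratio : (0:ℝ) < P s / Q s := div_pos h (hQ0 s)
    have key : (g s - 1) - Real.log (P s / Q s) + 1 ≤
        Real.exp ((g s - 1) - Real.log (P s / Q s)) := Real.add_one_le_exp _
    have hexp : Real.exp ((g s - 1) - Real.log (P s / Q s)) =
        Real.exp (g s - 1) * (Q s / P s) := by
      rw [Real.exp_sub, Real.exp_log hratio]
      field_simp
    rw [hexp] at key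
    have := mul_le_mul_of_nonneg_left key (le_of_lt h)
    have hPQ : P s * (Real.exp (g s - 1) * (Q s / P s)) = Q s * Real.exp (g s - 1) := by
      field_simp
    rw [hPQ] at this
    nlinarith [this]
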